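/- Let R be a ring in which every element is the sum of a tripotent and a nilpotent that commute with each other. Then R is strongly 2-nil-clean, i.e., every element of R is the sum of two idempotents and a nilpotent that pairwise commute. -/

import Mathlib

private lemma tripotent_decomp {R : Type*} [Ring R] {K : ℕ} (hk6 : (6:R)^(K+1) = 0)
    {p : R} (hp3 : p ^ 3 = p) :
    ∃ e f z : R, IsIdempotentElem e ∧ IsIdempotentElem f ∧ IsNilpotent z ∧
      p = e + f + z ∧
      ∀ x : R, Commute p x → Commute e x ∧ Commute f x ∧ Commute z x := by
  obtain ⟨u, v0, huv⟩ : ∃ a b : ℤ, a * 2^(K+1) + b * 3^(K+1) = 1 :=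
    (show IsCoprime ((2:ℤ)^(K+1)) ((3:ℤ)^(K+1)) from IsCoprime.pow ⟨-1, 1, by ring⟩)
  set G : ℤ := ∑ i ∈ Finset.range (K+1), (-3)^i with hGdef
  set S : ℤ := u * 2^(K+1) with hSdef
  set T : ℤ := 2 * G * S with hTdef
  have hG : 4 * G = 1 - (-3:ℤ)^(K+1) := by
    have := geom_sum_mul (-3 : ℤ) (K+1)
    rw [← hGdef] at this
    linear_combination -this
  have hS1 : S = 1 - v0 * 3^(K+1) := by rw [hSdef]; linarith [huv]
  have h63 : (6:ℤ)^(K+1) = 2^(K+1) * 3^(K+1) := by rw [← mul_pow]; norm_num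
  have hm : (-3:ℤ)^(K+1) * 2^(K+1) = (-6:ℤ)^(K+1) := by rw [← mul_pow]; norm_num
  have hm6 : ((6:ℤ)^(K+1)) ∣ ((-6:ℤ)^(K+1)) := ⟨(-1)^(K+1), by rw [← mul_pow]; norm_num⟩
  have h1 : (6:ℤ)^(K+1) ∣ 2*T - S := by
    have he : 2*T - S = (-6:ℤ)^(K+1) * (-u) := by
      linear_combination 2*hTdef + S*hG + (-(-3:ℤ)^(K+1))*hSdef + (-u)*hm
    rw [he]
    exact hm6.mul_right _
  have h2 : (6:ℤ)^(K+1) ∣ T*S - T := by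
    have he : T*S - T = (6:ℤ)^(K+1) * (-(2*G*u*v0)) := by
      linear_combination T*hS1 + (-(v0*3^(K+1)))*hTdef + (-(2*G*v0*3^(K+1)))*hSdef
        + (2*G*u*v0)*h63
    exact ⟨_, he⟩
  have hA : (6:ℤ)^(K+1) ∣ 2*T*T - T := by
    have he : 2*T*T - T = (2*T - S)*T + (T*S - T) := by ring
    rw [he]; exact dvd_add (h1.mul_right T) h2
  have h3T : (3:ℤ) ∣ 1 + T := by
    have hX : 4*(1+T) = 3*(2 - 2*v0*3^K + 2*(-3)^K*S) := by
      linear_combination (2*S)*hG + 4*hTdef + 2*hS1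
    have h34 : IsCoprime (3:ℤ) 4 := ⟨-1, 1, by ring⟩
    exact h34.dvd_of_dvd_mul_left ⟨_, hX⟩
  have hB : (6:ℤ)^(K+1) ∣ (-2)^(K+1) * (1+T)^(K+2) := by
    rw [h63]
    have cop : IsCoprime ((2:ℤ)^(K+1)) ((3:ℤ)^(K+1)) := IsCoprime.pow ⟨-1, 1, by ring⟩
    refine cop.mul_dvd (Dvd.dvd.mul_right ⟨(-1)^(K+1), by rw [← mul_pow]; norm_num⟩ _)
      (Dvd.dvd.mul_left ?_ _)
    exact dvd_trans (pow_dvd_pow_of_dvd h3T (K+1)) (pow_dvd_pow _ (by omega))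
  have Z0 : ∀ m : ℤ, (6:ℤ)^(K+1) ∣ m → ((m : R) = 0) := by
    rintro m ⟨d, rfl⟩
    push_cast
    rw [hk6, zero_mul]
  -- R-side
  set q : R := p - p^2 with hqdef
  have h22 : p^2 * p^2 = p^2 := by
    have he : p^2 * p^2 = p^3 * p := by noncomm_ring
    rw [he, hp3, ← pow_two]
  have h21 : p^2 * p = p := by
    have he : p^2 * p = p^3 := by noncomm_ring
    rw [he, hp3]
  have h12 : p * p^2 = p := by
    have he : p * p^2 = p^3 := by noncomm_ring
    rw [he, hp3]
  have hq2 : q * q = (-2 : ℤ) • q := by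
    have expand : q * q = p^2 - p*p^2 - p^2*p + p^2*p^2 := by rw [hqdef]; noncomm_ring
    rw [expand, h12, h21, h22, hqdef, zsmul_eq_mul]
    push_cast
    noncomm_ring
  have hqpow : ∀ n : ℕ, q^(n+1) = ((-2:ℤ)^n) • q := by
    intro n
    induction n with
    | zero => simp
    | succ n ih => rw [pow_succ, ih, smul_mul_assoc, hq2, smul_smul, ← pow_succ]
  -- the three elements
  refine ⟨p^2, (p^2 - p) * ((T:ℤ) : R), p - p^2 - (p^2 - p) * ((T:ℤ) : R), h22, ?_, ?_, ?_, ?_⟩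
  · -- f idempotent
    have hCC : 2 * ((T:R) * (T:R)) = (T:R) := by
      have h0 := Z0 _ hA
      push_cast at h0
      have hh := sub_eq_zero.mp h0
      rw [← mul_assoc]; exact hh
    show ((p^2 - p) * (T:R)) * ((p^2 - p) * (T:R)) = (p^2 - p) * (T:R)
    have step1 : ((p^2 - p) * (T:R)) * ((p^2 - p) * (T:R))
        = ((p^2 - p) * (p^2 - p)) * ((T:R) * (T:R)) := by
      rw [mul_assoc, ← mul_assoc (T:R), (Int.cast_commute T (p^2 - p)).eq,
        mul_assoc, ← mul_assoc, ← mul_assoc]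
    have step2 : (p^2 - p) * (p^2 - p) = 2 * (p^2 - p) := by
      have expand : (p^2 - p) * (p^2 - p) = p^2 - p*p^2 - p^2*p + p^2*p^2 := by noncomm_ring
      rw [expand, h12, h21, h22]; noncomm_ring
    have hc2 : (2:R) * (p^2 - p) = (p^2 - p) * 2 := (Commute.ofNat_left 2 (p^2-p)).eq
    rw [step1, step2, hc2, mul_assoc, hCC]
  · -- nilpotent
    have hv : p - p^2 - (p^2 - p) * ((T:ℤ) : R) = q * (1 + (T:R)) := by
      rw [hqdef]
      have : (q : R) = p - p^2 := rfl
      noncomm_ring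
    refine ⟨K+2, ?_⟩
    rw [hv]
    have hcq : Commute q (1 + (T:R)) :=
      (Commute.one_right q).add_right (Int.cast_commute T q).symm
    rw [hcq.mul_pow, hqpow (K+1), smul_mul_assoc]
    have hc : (1 + (T:R))^(K+2) = (((1+T)^(K+2) : ℤ) : R) := by push_cast; rfl
    rw [hc, ← mul_smul_comm, zsmul_eq_mul, ← Int.cast_mul, Z0 _ hB, mul_zero]
  · abel
  · intro x hx
    have hx2 : Commute (p^2) x := hx.pow_left 2
    have hxT : Commute ((T:ℤ):R) x := Int.cast_commute T x
    have hfc : Commute ((p^2 - p) * ((T:ℤ):R)) x := (hx2.sub_left hx).mul_left hxT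
    exact ⟨hx2, hfc, (hx.sub_left hx2).sub_left hfc⟩

/-- A ring is strongly 2-nil-clean if every element is the sum of two
idempotents and a nilpotent that pairwise commute. -/
def Strongly2NilClean (R : Type*) [Ring R] : Prop :=
  ∀ a : R, ∃ e f w : R, IsIdempotentElem e ∧ IsIdempotentElem f ∧ IsNilpotent w ∧
    Commute e f ∧ Commute e w ∧ Commute f w ∧ a = e + f + w

theorem stmt_2 (R : Type*) [Ring R]
    (h : ∀ a : R, ∃ p w : R, p ^ 3 = p ∧ IsNilpotent w ∧ Commute p w ∧ a = p + w) :
    Strongly2NilClean R := by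
  have h6 : IsNilpotent (6 : R) := by
    obtain ⟨p2, w2, hp2, hw2, hcw2, h2eq⟩ := h 2
    have hpw2 : p2 = 2 - w2 := by rw [h2eq]; abel
    have key : (6:R) = w2 * (11 - 6*w2 + w2^2) := by
      have h1 : ((2:R) - w2)^3 = 2 - w2 := by rw [← hpw2]; exact hp2
      have h2' : (6:R) - w2*(11 - 6*w2 + w2^2) = ((2:R) - w2)^3 - ((2:R) - w2) := by
        noncomm_ring
        norm_num
        abel
      rw [h1, sub_self] at h2'
      exact sub_eq_zero.mp h2'
    rw [key]
    have hcc : Commute w2 (11 - 6*w2 + w2^2) :=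
      ((Commute.ofNat_right w2 11).sub_right
        ((Commute.ofNat_right w2 6).mul_right (Commute.refl w2))).add_right
        ((Commute.refl w2).pow_right 2)
    exact hcc.isNilpotent_mul_right hw2
  obtain ⟨k0, hk0⟩ := h6
  have hk6 : (6:R)^(k0+1) = 0 := by rw [pow_succ, hk0, zero_mul]
  intro a
  obtain ⟨p, w, hp3, hw, hpw, ha⟩ := h a
  obtain ⟨e, f, z, he, hf, hz, hpefz, hcomm⟩ := tripotent_decomp hk6 hp3
  obtain ⟨hce, hcf, hcz⟩ := hcomm w hpw
  have hpp := hcomm p (Commute.refl p)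
  have hef : Commute e f := (hcomm f hpp.2.1.symm).1
  have hez : Commute e z := (hcomm z hpp.2.2.symm).1
  have hfz : Commute f z := (hcomm z hpp.2.2.symm).2.1
  refine ⟨e, f, z + w, he, hf, hcz.isNilpotent_add hz hw, hef,
    hez.add_right hce, hfz.add_right hcf, ?_⟩
  rw [ha, hpefz]
  abel
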